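/- Let (Ω, P) be a probability space, Λ > 0, N : Ω → ℕ a Poisson random variable with mean Λ, and (T_i)_{i∈ℕ} a sequence of real-valued random variables, each with common law μ (a Borel probability measure on ℝ), such that the family (N, T_0, T_1, …) is mutually independent. Fix t ∈ ℝ and define N_past(ω) = #{ i < N(ω) : T_i(ω) < t } and N_future(ω) = #{ i < N(ω) : T_i(ω) ≥ t }. Then N_past and N_future are independent random variables, N_past is Poisson with mean Λ·μ((−∞,t)), and N_future is Poisson with mean Λ·μ([t,∞)). -/

import Mathlib

open MeasureTheory ProbabilityTheory
open scoped Classical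

private lemma exp_tsum_aux (x : ℝ) :
    ∑' n : ℕ, x ^ n / (n.factorial : ℝ) = Real.exp x := by
  rw [Real.exp_eq_exp_ℝ, NormedSpace.exp_eq_tsum_div]

/-- Proposition 1 of the paper: if `N` is Poisson with mean `Λ` and the points
`T_0, …, T_{N-1}` are i.i.d. with law `μ`, all mutually independent, then the numbers
of points falling before the fixed time `t` and at or after `t` are independent, and
each is Poisson with means `Λ μ((-∞,t))` and `Λ μ([t,∞))` respectively. -/
theorem poisson_past_future_split
    {Ω : Type*} [MeasurableSpace Ω] (P : Measure Ω) [IsProbabilityMeasure P]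
    (Λ : ℝ) (hΛ : 0 < Λ)
    (N : Ω → ℕ) (hNmeas : Measurable N)
    (hN : ∀ r : ℕ, P {ω | N ω = r} = ENNReal.ofReal (Λ ^ r * Real.exp (-Λ) / r.factorial))
    (T : ℕ → Ω → ℝ) (hTmeas : ∀ i, Measurable (T i))
    (μ : Measure ℝ) [IsProbabilityMeasure μ]
    (hlaw : ∀ i, P.map (T i) = μ)
    (hindep : iIndepFun (β := fun _ : Option ℕ => ℝ)
      (fun o : Option ℕ => match o with
        | none => fun ω => (N ω : ℝ)
        | some i => T i) P)
    (t : ℝ)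
    (Npast Nfuture : Ω → ℕ)
    (hpast : ∀ ω, Npast ω = ((Finset.range (N ω)).filter (fun i => T i ω < t)).card)
    (hfuture : ∀ ω, Nfuture ω = ((Finset.range (N ω)).filter (fun i => t ≤ T i ω)).card) :
    IndepFun Npast Nfuture P ∧
    (∀ r : ℕ, P {ω | Npast ω = r}
      = ENNReal.ofReal ((Λ * (μ (Set.Iio t)).toReal) ^ r
          * Real.exp (-(Λ * (μ (Set.Iio t)).toReal)) / r.factorial)) ∧
    (∀ r : ℕ, P {ω | Nfuture ω = r}
      = ENNReal.ofReal ((Λ * (μ (Set.Ici t)).toReal) ^ r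
          * Real.exp (-(Λ * (μ (Set.Ici t)).toReal)) / r.factorial)) := by
  classical
  set p := (μ (Set.Iio t)).toReal with hp_def
  set q := (μ (Set.Ici t)).toReal with hq_def
  have hp0 : 0 ≤ p := ENNReal.toReal_nonneg
  have hq0 : 0 ≤ q := ENNReal.toReal_nonneg
  have hpq : p + q = 1 := by
    have hd : Disjoint (Set.Iio t) (Set.Ici t) := Set.Iio_disjoint_Ici le_rfl
    have hu := measure_union (μ := μ) hd measurableSet_Ici
    rw [Set.Iio_union_Ici, measure_univ] at hu
    have h2 := congrArg ENNReal.toReal hu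
    rw [ENNReal.toReal_add (measure_ne_top _ _) (measure_ne_top _ _)] at h2
    simpa using h2.symm
  have hT_Iio : ∀ i, P (T i ⁻¹' Set.Iio t) = ENNReal.ofReal p := by
    intro i
    have h : P (T i ⁻¹' Set.Iio t) = μ (Set.Iio t) := by
      rw [← hlaw i, Measure.map_apply (hTmeas i) measurableSet_Iio]
    rw [h, hp_def, ENNReal.ofReal_toReal (measure_ne_top _ _)]
  have hT_Ici : ∀ i, P (T i ⁻¹' Set.Ici t) = ENNReal.ofReal q := by
    intro i
    have h : P (T i ⁻¹' Set.Ici t) = μ (Set.Ici t) := by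
      rw [← hlaw i, Measure.map_apply (hTmeas i) measurableSet_Ici]
    rw [h, hq_def, ENNReal.ofReal_toReal (measure_ne_top _ _)]
  -- counting helper
  have hcount : ∀ (ω : Ω) (n : ℕ),
      ((Finset.range n).filter (fun i => T i ω < t)).card
        + ((Finset.range n).filter (fun i => t ≤ T i ω)).card = n := by
    intro ω n
    have h := Finset.card_filter_add_card_filter_not
      (s := Finset.range n) (p := fun i => T i ω < t)
    simp only [not_lt] at h
    simpa using h
  -- the elementary events
  set E : ℕ → Finset ℕ → Set Ω := fun n S =>
    {ω | N ω = n} ∩ ⋂ i ∈ Finset.range n,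
      T i ⁻¹' (if i ∈ S then Set.Iio t else Set.Ici t) with hE_def
  have hEmem : ∀ (n : ℕ) (S : Finset ℕ), S ⊆ Finset.range n → ∀ ω : Ω,
      ω ∈ E n S ↔ (N ω = n ∧ (Finset.range n).filter (fun i => T i ω < t) = S) := by
    intro n S hS ω
    simp only [hE_def, Set.mem_inter_iff, Set.mem_setOf_eq, Set.mem_iInter, Set.mem_preimage]
    constructor
    · rintro ⟨hN1, hI⟩
      refine ⟨hN1, ?_⟩
      ext i
      simp only [Finset.mem_filter]
      constructor
      · rintro ⟨hi, hlt⟩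
        by_contra hiS
        have h2 := hI i hi
        rw [if_neg hiS] at h2
        exact absurd hlt (not_lt.2 h2)
      · intro hiS
        have hi := hS hiS
        have h2 := hI i hi
        rw [if_pos hiS] at h2
        exact ⟨hi, h2⟩
    · rintro ⟨hN1, hfilt⟩
      refine ⟨hN1, fun i hi => ?_⟩
      by_cases hiS : i ∈ S
      · rw [if_pos hiS]
        rw [← hfilt] at hiS
        exact (Finset.mem_filter.mp hiS).2
      · rw [if_neg hiS]
        rw [← hfilt] at hiS
        simp only [Finset.mem_filter, not_and, not_lt] at hiS
        exact hiS hi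
  have hEmeas : ∀ n S, MeasurableSet (E n S) := by
    intro n S
    refine (hNmeas (measurableSet_singleton n)).inter ?_
    exact MeasurableSet.biInter (Finset.range n).countable_toSet fun i _ =>
      (hTmeas i) (by split_ifs <;> [exact measurableSet_Iio; exact measurableSet_Ici])
  have hPE : ∀ (a b : ℕ) (S : Finset ℕ), S ∈ (Finset.range (a+b)).powersetCard a →
      P (E (a+b) S) = P {ω | N ω = a+b} * ENNReal.ofReal p ^ a * ENNReal.ofReal q ^ b := by
    intro a b S hSmem
    obtain ⟨hS, hcard⟩ := Finset.mem_powersetCard.mp hSmem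
    set n := a + b with hn_def
    set F : Option ℕ → Ω → ℝ := (fun o : Option ℕ => match o with
        | none => fun ω => (N ω : ℝ)
        | some i => T i) with hF_def
    set sets : Option ℕ → Set ℝ := fun o => match o with
      | none => ({(n : ℝ)} : Set ℝ)
      | some i => if i ∈ S then Set.Iio t else Set.Ici t with hsets_def
    set I : Finset (Option ℕ) := insert none ((Finset.range n).image some) with hI_def
    have hmeas : ∀ o : Option ℕ, o ∈ I → MeasurableSet (sets o) := by
      rintro (_ | i) _
      · exact measurableSet_singleton _
      · by_cases h : i ∈ S
        · simpa [hsets_def, h] using measurableSet_Iio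
        · simpa [hsets_def, h] using measurableSet_Ici
    have hkey := hindep.measure_inter_preimage_eq_mul I hmeas
    have hnone : none ∉ (Finset.range n).image some := by simp
    have hInter : (⋂ o ∈ I, F o ⁻¹' sets o) = E n S := by
      rw [hI_def]
      rw [Finset.set_biInter_insert]
      have h1 : (F none ⁻¹' sets none) = {ω | N ω = n} := by
        ext ω; simp [hF_def, hsets_def, Nat.cast_inj]
      have h2 : (⋂ o ∈ ((Finset.range n).image some : Finset (Option ℕ)), F o ⁻¹' sets o)
          = ⋂ i ∈ Finset.range n, T i ⁻¹' (if i ∈ S then Set.Iio t else Set.Ici t) := by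
        rw [Finset.set_biInter_finset_image]
      rw [h1, h2, hE_def]
    have hProd : ∏ o ∈ I, P (F o ⁻¹' sets o)
        = P {ω | N ω = n} * (ENNReal.ofReal p ^ a * ENNReal.ofReal q ^ b) := by
      rw [hI_def, Finset.prod_insert hnone]
      have h1 : (F none ⁻¹' sets none) = {ω | N ω = n} := by
        ext ω; simp [hF_def, hsets_def, Nat.cast_inj]
      rw [h1]
      congr 1
      rw [Finset.prod_image (by simp)]
      have h3 : ∀ i ∈ Finset.range n, P (F (some i) ⁻¹' sets (some i))
          = if i ∈ S then ENNReal.ofReal p else ENNReal.ofReal q := by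
        intro i _
        by_cases h : i ∈ S
        · simp only [hF_def, hsets_def, h, if_pos]
          exact hT_Iio i
        · simp only [hF_def, hsets_def, h, if_neg, if_false]
          exact hT_Ici i
      rw [Finset.prod_congr rfl h3, Finset.prod_ite, Finset.prod_const, Finset.prod_const]
      have h4 : (Finset.range n).filter (· ∈ S) = S := by
        rw [Finset.filter_mem_eq_inter]
        exact Finset.inter_eq_right.mpr hS
      have h5 : ((Finset.range n).filter (fun i => ¬ i ∈ S)).card = b := by
        have h6 := Finset.card_filter_add_card_filter_not
          (s := Finset.range n) (p := fun i => i ∈ S)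
        rw [h4] at h6
        simp only [Finset.card_range] at h6
        omega
      rw [h4, hcard, h5]
    rw [← hInter, hkey, hProd, mul_assoc]
  have hjointset : ∀ a b : ℕ, {ω | Npast ω = a ∧ Nfuture ω = b}
      = ⋃ S ∈ ((Finset.range (a+b)).powersetCard a : Finset (Finset ℕ)), E (a+b) S := by
    intro a b
    ext ω
    simp only [Set.mem_setOf_eq, Set.mem_iUnion, exists_prop]
    constructor
    · rintro ⟨ha, hb⟩
      rw [hpast ω] at ha
      rw [hfuture ω] at hb
      have hn : N ω = a + b := by rw [← hcount ω (N ω), ha, hb]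
      refine ⟨(Finset.range (a+b)).filter (fun i => T i ω < t), ?_, ?_⟩
      · rw [Finset.mem_powersetCard]
        exact ⟨Finset.filter_subset _ _, by rw [← hn, ha]⟩
      · exact (hEmem (a+b) _ (Finset.filter_subset _ _) ω).mpr ⟨hn, rfl⟩
    · rintro ⟨S, hSmem, hωE⟩
      obtain ⟨hS, hcard⟩ := Finset.mem_powersetCard.mp hSmem
      obtain ⟨hn, hfilt⟩ := (hEmem (a+b) S hS ω).mp hωE
      have hpa : Npast ω = a := by rw [hpast ω, hn, hfilt, hcard]
      refine ⟨hpa, ?_⟩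
      have hc := hcount ω (a+b)
      rw [hpast ω, hn] at hpa
      rw [hfuture ω, hn]
      omega
  have hjoint : ∀ a b : ℕ, P {ω | Npast ω = a ∧ Nfuture ω = b}
      = ENNReal.ofReal ((Λ * p) ^ a * Real.exp (-(Λ * p)) / a.factorial)
        * ENNReal.ofReal ((Λ * q) ^ b * Real.exp (-(Λ * q)) / b.factorial) := by
    intro a b
    have hdisj : (↑((Finset.range (a+b)).powersetCard a) : Set (Finset ℕ)).PairwiseDisjoint
        (E (a+b)) := by
      intro S hSmem S' hS'mem hne
      have hS := (Finset.mem_powersetCard.mp (by exact_mod_cast hSmem)).1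
      have hS' := (Finset.mem_powersetCard.mp (by exact_mod_cast hS'mem)).1
      rw [Function.onFun, Set.disjoint_left]
      intro ω hω hω'
      exact hne (((hEmem _ _ hS ω).mp hω).2.symm.trans ((hEmem _ _ hS' ω).mp hω').2)
    rw [hjointset a b, measure_biUnion_finset hdisj (fun S _ => hEmeas _ S)]
    rw [Finset.sum_congr rfl (hPE a b), Finset.sum_const, Finset.card_powersetCard,
      Finset.card_range, nsmul_eq_mul, hN (a+b)]
    have hΛpq : Λ * p + Λ * q = Λ := by rw [← mul_add, hpq, mul_one]
    have hexp : Real.exp (-Λ) = Real.exp (-(Λ * p)) * Real.exp (-(Λ * q)) := by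
      rw [← Real.exp_add]; congr 1; linarith
    have hch : (((a+b).choose a : ℝ)) * a.factorial * b.factorial = (a+b).factorial := by
      have h := Nat.choose_mul_factorial_mul_factorial (Nat.le_add_right a b)
      have h2 : a + b - a = b := by omega
      rw [h2] at h
      exact_mod_cast congrArg (Nat.cast : ℕ → ℝ) h
    have hreal : ((a+b).choose a : ℝ) * (Λ^(a+b) * Real.exp (-Λ) / (a+b).factorial) * p^a * q^b
        = ((Λ*p)^a * Real.exp (-(Λ*p)) / a.factorial)
          * ((Λ*q)^b * Real.exp (-(Λ*q)) / b.factorial) := by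
      have hfa : (a.factorial : ℝ) ≠ 0 := Nat.cast_ne_zero.mpr (Nat.factorial_ne_zero a)
      have hfb : (b.factorial : ℝ) ≠ 0 := Nat.cast_ne_zero.mpr (Nat.factorial_ne_zero b)
      have hfab : ((a+b).factorial : ℝ) ≠ 0 := Nat.cast_ne_zero.mpr (Nat.factorial_ne_zero _)
      rw [hexp, pow_add, mul_pow, mul_pow]
      field_simp
      rw [← hch]
      ring
    rw [← ENNReal.ofReal_pow hp0, ← ENNReal.ofReal_pow hq0,
      ← ENNReal.ofReal_natCast ((a+b).choose a),
      ← ENNReal.ofReal_mul (by positivity), ← ENNReal.ofReal_mul (by positivity),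
      ← ENNReal.ofReal_mul (by positivity), ← ENNReal.ofReal_mul (by positivity)]
    rw [← hreal]
    exact congrArg ENNReal.ofReal (by ring)
  have hsum : ∀ m : ℝ, 0 ≤ m →
      ∑' r : ℕ, ENNReal.ofReal (m ^ r * Real.exp (-m) / r.factorial) = 1 := by
    intro m hm
    have hsumm : Summable (fun r : ℕ => m ^ r * Real.exp (-m) / (r.factorial : ℝ)) := by
      have h := (Real.summable_pow_div_factorial m).mul_right (Real.exp (-m))
      refine h.congr fun r => by ring
    rw [← ENNReal.ofReal_tsum_of_nonneg (fun r => by positivity) hsumm]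
    have h1 : (fun r : ℕ => m ^ r * Real.exp (-m) / (r.factorial : ℝ))
        = fun r : ℕ => (m ^ r / (r.factorial : ℝ)) * Real.exp (-m) := by funext r; ring
    rw [h1, tsum_mul_right, exp_tsum_aux, ← Real.exp_add]
    simp
  have hsum_q : ∑' b : ℕ, ENNReal.ofReal ((Λ * q) ^ b * Real.exp (-(Λ * q)) / b.factorial) = 1 :=
    hsum (Λ * q) (by positivity)
  have hsum_p : ∑' a : ℕ, ENNReal.ofReal ((Λ * p) ^ a * Real.exp (-(Λ * p)) / a.factorial) = 1 :=
    hsum (Λ * p) (by positivity)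
  have hmeas_joint : ∀ a b : ℕ, MeasurableSet {ω | Npast ω = a ∧ Nfuture ω = b} := by
    intro a b
    rw [hjointset a b]
    exact (Finset.measurableSet_biUnion _ fun S _ => hEmeas _ S)
  have hmarg_past : ∀ a : ℕ, P {ω | Npast ω = a}
      = ENNReal.ofReal ((Λ * p) ^ a * Real.exp (-(Λ * p)) / a.factorial) := by
    intro a
    have hset : {ω | Npast ω = a} = ⋃ b : ℕ, {ω | Npast ω = a ∧ Nfuture ω = b} := by
      ext ω
      simp only [Set.mem_setOf_eq, Set.mem_iUnion]
      exact ⟨fun h => ⟨Nfuture ω, h, rfl⟩, fun ⟨b, h, _⟩ => h⟩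
    have hdisj : Pairwise (Function.onFun Disjoint
        (fun b => {ω | Npast ω = a ∧ Nfuture ω = b})) := by
      intro b b' hne
      rw [Function.onFun, Set.disjoint_left]
      rintro ω ⟨_, hb⟩ ⟨_, hb'⟩
      exact hne (hb ▸ hb')
    rw [hset, measure_iUnion hdisj (fun b => hmeas_joint a b), tsum_congr (fun b => hjoint a b),
      ENNReal.tsum_mul_left, hsum_q, mul_one]
  have hmeas_past : ∀ a : ℕ, MeasurableSet {ω | Npast ω = a} := by
    intro a
    have hset : {ω | Npast ω = a} = ⋃ b : ℕ, {ω | Npast ω = a ∧ Nfuture ω = b} := by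
      ext ω
      simp only [Set.mem_setOf_eq, Set.mem_iUnion]
      exact ⟨fun h => ⟨Nfuture ω, h, rfl⟩, fun ⟨b, h, _⟩ => h⟩
    rw [hset]
    exact MeasurableSet.iUnion fun b => hmeas_joint a b
  have hmarg_future : ∀ b : ℕ, P {ω | Nfuture ω = b}
      = ENNReal.ofReal ((Λ * q) ^ b * Real.exp (-(Λ * q)) / b.factorial) := by
    intro b
    have hset : {ω | Nfuture ω = b} = ⋃ a : ℕ, {ω | Npast ω = a ∧ Nfuture ω = b} := by
      ext ω
      simp only [Set.mem_setOf_eq, Set.mem_iUnion]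
      exact ⟨fun h => ⟨Npast ω, rfl, h⟩, fun ⟨a, _, h⟩ => h⟩
    have hdisj : Pairwise (Function.onFun Disjoint
        (fun a => {ω | Npast ω = a ∧ Nfuture ω = b})) := by
      intro a a' hne
      rw [Function.onFun, Set.disjoint_left]
      rintro ω ⟨ha, _⟩ ⟨ha', _⟩
      exact hne (ha ▸ ha')
    rw [hset, measure_iUnion hdisj (fun a => hmeas_joint a b), tsum_congr (fun a => hjoint a b),
      ENNReal.tsum_mul_right, hsum_p, one_mul]
  have hmeas_future : ∀ b : ℕ, MeasurableSet {ω | Nfuture ω = b} := by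
    intro b
    have hset : {ω | Nfuture ω = b} = ⋃ a : ℕ, {ω | Npast ω = a ∧ Nfuture ω = b} := by
      ext ω
      simp only [Set.mem_setOf_eq, Set.mem_iUnion]
      exact ⟨fun h => ⟨Npast ω, rfl, h⟩, fun ⟨a, _, h⟩ => h⟩
    rw [hset]
    exact MeasurableSet.iUnion fun a => hmeas_joint a b
  refine ⟨?_, hmarg_past, hmarg_future⟩
  rw [indepFun_iff_measure_inter_preimage_eq_mul]
  intro s u _ _
  have hps : Npast ⁻¹' s = ⋃ a : s, {ω | Npast ω = (a : ℕ)} := by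
    ext ω
    simp only [Set.mem_preimage, Set.mem_iUnion, Set.mem_setOf_eq]
    exact ⟨fun h => ⟨⟨Npast ω, h⟩, rfl⟩, fun ⟨a, ha⟩ => ha ▸ a.2⟩
  have hfu : Nfuture ⁻¹' u = ⋃ b : u, {ω | Nfuture ω = (b : ℕ)} := by
    ext ω
    simp only [Set.mem_preimage, Set.mem_iUnion, Set.mem_setOf_eq]
    exact ⟨fun h => ⟨⟨Nfuture ω, h⟩, rfl⟩, fun ⟨b, hb⟩ => hb ▸ b.2⟩
  have hdisj_s : Pairwise (Function.onFun Disjoint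
      (fun a : s => {ω | Npast ω = (a : ℕ)})) := by
    intro a a' hne
    rw [Function.onFun, Set.disjoint_left]
    intro ω ha ha'
    exact hne (Subtype.ext (ha ▸ ha'))
  have hdisj_u : Pairwise (Function.onFun Disjoint
      (fun b : u => {ω | Nfuture ω = (b : ℕ)})) := by
    intro b b' hne
    rw [Function.onFun, Set.disjoint_left]
    intro ω hb hb'
    exact hne (Subtype.ext (hb ▸ hb'))
  have hinter : Npast ⁻¹' s ∩ Nfuture ⁻¹' u
      = ⋃ a : s, ({ω | Npast ω = (a : ℕ)} ∩ Nfuture ⁻¹' u) := by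
    rw [hps, Set.iUnion_inter]
  have hdisj_s' : Pairwise (Function.onFun Disjoint
      (fun a : s => {ω | Npast ω = (a : ℕ)} ∩ Nfuture ⁻¹' u)) := by
    intro a a' hne
    exact ((hdisj_s hne).inter_right _).inter_left _
  have hinner : ∀ a : s, P ({ω | Npast ω = (a : ℕ)} ∩ Nfuture ⁻¹' u)
      = P {ω | Npast ω = (a : ℕ)} * P (Nfuture ⁻¹' u) := by
    intro a
    have h1 : {ω | Npast ω = (a : ℕ)} ∩ Nfuture ⁻¹' u
        = ⋃ b : u, {ω | Npast ω = (a : ℕ) ∧ Nfuture ω = (b : ℕ)} := by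
      rw [hfu, Set.inter_iUnion]
      rfl
    have hd : Pairwise (Function.onFun Disjoint
        (fun b : u => {ω | Npast ω = (a : ℕ) ∧ Nfuture ω = (b : ℕ)})) := by
      intro b b' hne
      rw [Function.onFun, Set.disjoint_left]
      rintro ω ⟨_, hb⟩ ⟨_, hb'⟩
      exact hne (Subtype.ext (hb ▸ hb'))
    have h2 : ∀ b : u, P {ω | Npast ω = (a : ℕ) ∧ Nfuture ω = (b : ℕ)}
        = P {ω | Npast ω = (a : ℕ)} * P {ω | Nfuture ω = (b : ℕ)} := by
      intro b
      rw [hjoint, hmarg_past, hmarg_future]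
    rw [h1, measure_iUnion hd (fun b => hmeas_joint _ _), tsum_congr h2,
      ENNReal.tsum_mul_left]
    congr 1
    rw [hfu, measure_iUnion hdisj_u (fun b => hmeas_future _)]
  have hmeas_fu : MeasurableSet (Nfuture ⁻¹' u) := by
    rw [hfu]
    exact MeasurableSet.iUnion fun b => hmeas_future _
  rw [hinter, measure_iUnion hdisj_s' (fun a => (hmeas_past _).inter hmeas_fu),
    tsum_congr hinner, ENNReal.tsum_mul_right]
  congr 1
  rw [hps, measure_iUnion hdisj_s (fun a => hmeas_past _)]
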